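/- arXiv:1706.06545 — 2 statements merged into one kernel-verified Lean document; each statement's English description precedes it below -/
import Mathlib

section
/- In an involutive quantale Q that is a projection b ∈ Q with b·b = b = b*: the down-segment ↓b is an involutive subquantale of Q, and if Q is stably Gelfand then so is ↓b. -/
/-- An involutive quantale: a complete lattice with an associative multiplication
distributing over arbitrary joins in each variable, and a join-preserving
involution that is an anti-automorphism of period 2. -/
class InvQuantale (Q : Type*) extends CompleteLattice Q, Semigroup Q, StarMul Q where
  mul_sSup : ∀ (a : Q) (S : Set Q), a * sSup S = ⨆ s ∈ S, a * s
  sSup_mul : ∀ (S : Set Q) (a : Q), sSup S * a = ⨆ s ∈ S, s * a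
  star_sSup : ∀ (S : Set Q), star (sSup S) = ⨆ s ∈ S, star s

/-- The set `I_b(Q)` of partial units relative to `b`. -/
def Ib {Q : Type*} [InvQuantale Q] (b : Q) : Set Q :=
  {a | star a * a ≤ b ∧ a * star a ≤ b ∧ a * b ≤ a ∧ b * a ≤ a}

/-- `Q` is stably Gelfand if `a a* a ≤ a` implies `a a* a = a`. -/
def IsStablyGelfand (Q : Type*) [InvQuantale Q] : Prop :=
  ∀ a : Q, a * star a * a ≤ a → a * star a * a = a


lemma IQ.mul_le_mul_left {Q : Type*} [InvQuantale Q] {a b : Q} (c : Q) (h : a ≤ b) :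
    c * a ≤ c * b := by
  have : c * sSup ({a, b} : Set Q) = ⨆ s ∈ ({a, b} : Set Q), c * s := InvQuantale.mul_sSup c {a, b}
  have hs : sSup ({a, b} : Set Q) = b := by
    rw [sSup_pair]; exact sup_eq_right.mpr h
  rw [hs] at this
  rw [this]
  exact le_iSup₂ (f := fun s (_ : s ∈ ({a, b} : Set Q)) => c * s) a (Set.mem_insert a {b})

lemma IQ.mul_le_mul_right {Q : Type*} [InvQuantale Q] {a b : Q} (c : Q) (h : a ≤ b) :
    a * c ≤ b * c := by
  have : sSup ({a, b} : Set Q) * c = ⨆ s ∈ ({a, b} : Set Q), s * c := InvQuantale.sSup_mul {a, b} c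
  have hs : sSup ({a, b} : Set Q) = b := by
    rw [sSup_pair]; exact sup_eq_right.mpr h
  rw [hs] at this
  rw [this]
  exact le_iSup₂ (f := fun s (_ : s ∈ ({a, b} : Set Q)) => s * c) a (Set.mem_insert a {b})

lemma IQ.star_le_star {Q : Type*} [InvQuantale Q] {a b : Q} (h : a ≤ b) :
    star a ≤ star b := by
  have : star (sSup ({a, b} : Set Q)) = ⨆ s ∈ ({a, b} : Set Q), star s :=
    InvQuantale.star_sSup {a, b}
  have hs : sSup ({a, b} : Set Q) = b := by
    rw [sSup_pair]; exact sup_eq_right.mpr h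
  rw [hs] at this
  rw [this]
  exact le_iSup₂ (f := fun s (_ : s ∈ ({a, b} : Set Q)) => star s) a (Set.mem_insert a {b})

theorem downSegment_subquantale {Q : Type*} [InvQuantale Q]
    (b : Q) (hb : b * b = b) (hb' : star b = b) :
    (∀ a c : Q, a ≤ b → c ≤ b → a * c ≤ b) ∧
    (∀ a : Q, a ≤ b → star a ≤ b) ∧
    (IsStablyGelfand Q →
      ∀ a : Q, a ≤ b → a * star a * a ≤ a → a * star a * a = a) := by
  refine ⟨?_, ?_, ?_⟩
  · intro a c ha hc
    calc a * c ≤ b * b := le_trans (IQ.mul_le_mul_left a hc) (IQ.mul_le_mul_right b ha)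
    _ = b := hb
  · intro a ha
    calc star a ≤ star b := IQ.star_le_star ha
    _ = b := hb'
  · intro hsg a _ h
    exact hsg a h
end

section
/- Let Q be a unital stably Gelfand quantal frame satisfying ⋁I(Q) = 1. Then Q satisfies the support axioms of an inverse quantal frame: for all a ∈ Q, a1 ∧ e ≤ aa* and a ≤ (a1 ∧ e)a. -/
section helpers

variable {Q : Type*} [InvQuantale Q]

lemma iq_mul_le_mul_left {a b : Q} (h : a ≤ b) (c : Q) : c * a ≤ c * b := by
  have h1 := InvQuantale.mul_sSup c {a, b}
  rw [sSup_pair, sup_eq_right.mpr h, iSup_pair] at h1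
  rw [h1]; exact le_sup_left

lemma iq_mul_le_mul_right {a b : Q} (h : a ≤ b) (c : Q) : a * c ≤ b * c := by
  have h1 := InvQuantale.sSup_mul {a, b} c
  rw [sSup_pair, sup_eq_right.mpr h, iSup_pair] at h1
  rw [h1]; exact le_sup_left

lemma iq_mul_le_mul {a b c d : Q} (h1 : a ≤ b) (h2 : c ≤ d) : a * c ≤ b * d :=
  le_trans (iq_mul_le_mul_left h2 a) (iq_mul_le_mul_right h1 d)

lemma iq_star_mono {a b : Q} (h : a ≤ b) : star a ≤ star b := by
  have h1 := InvQuantale.star_sSup ({a, b} : Set Q)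
  rw [sSup_pair, sup_eq_right.mpr h, iSup_pair] at h1
  rw [h1]; exact le_sup_left

end helpers

theorem support_axioms {Q : Type*} [InvQuantale Q]
    (hsg : IsStablyGelfand Q)
    (hframe : ∀ (a : Q) (S : Set Q), a ⊓ sSup S = ⨆ s ∈ S, a ⊓ s)
    (e : Q) (he1 : ∀ a : Q, e * a = a) (he2 : ∀ a : Q, a * e = a)
    (he3 : star e = e)
    (hcov : sSup {s : Q | star s * s ≤ e ∧ s * star s ≤ e} = ⊤) :
    ∀ a : Q, a * ⊤ ⊓ e ≤ a * star a ∧ a ≤ (a * ⊤ ⊓ e) * a := by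
  intro a
  set S : Set Q := {s : Q | star s * s ≤ e ∧ s * star s ≤ e} with hS
  constructor
  · -- a⊤ ∧ e ≤ a a*
    have h1 : a * ⊤ ⊓ e = ⨆ s ∈ S, (a * s ⊓ e) := by
      rw [← hcov, InvQuantale.mul_sSup, ← sSup_image, inf_comm, hframe, ← sSup_image,
        ← sSup_image, Set.image_image]
      congr 1
      ext x
      simp [inf_comm]
    rw [h1]
    refine iSup_le fun s => iSup_le fun hs => ?_
    set t : Q := a * s ⊓ e with ht
    have hte : t ≤ e := inf_le_right
    have htstar : star t ≤ e := he3 ▸ iq_star_mono hte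
    have hkey : t * star t * t ≤ t := by
      calc t * star t * t ≤ t * e * t := iq_mul_le_mul_right (iq_mul_le_mul_left htstar t) t
        _ = t * t := by rw [he2]
        _ ≤ t * e := iq_mul_le_mul_left hte t
        _ = t := he2 t
    have heq := hsg t hkey
    calc t = t * star t * t := heq.symm
      _ ≤ t * star t * e := iq_mul_le_mul_left hte _
      _ = t * star t := he2 _
      _ ≤ (a * s) * star (a * s) := iq_mul_le_mul inf_le_left (iq_star_mono inf_le_left)
      _ = a * (s * star s) * star a := by rw [star_mul, mul_assoc, mul_assoc, mul_assoc]
      _ ≤ a * e * star a := iq_mul_le_mul_right (iq_mul_le_mul_left hs.2 a) _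
      _ = a * star a := by rw [he2]
  · -- a ≤ (a⊤ ∧ e) a
    have h2 : a = ⨆ s ∈ S, (a ⊓ s) := by
      conv_lhs => rw [← inf_top_eq a, ← hcov, hframe]
    conv_lhs => rw [h2]
    refine iSup_le fun s => iSup_le fun hs => ?_
    set b : Q := a ⊓ s with hb
    have hkey : b * star b * b ≤ b := by
      refine le_inf ?_ ?_
      · calc b * star b * b ≤ a * star s * s :=
              iq_mul_le_mul (iq_mul_le_mul inf_le_left (iq_star_mono inf_le_right)) inf_le_right
          _ = a * (star s * s) := mul_assoc _ _ _
          _ ≤ a * e := iq_mul_le_mul_left hs.1 a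
          _ = a := he2 a
      · calc b * star b * b ≤ s * star s * s :=
              iq_mul_le_mul (iq_mul_le_mul inf_le_right (iq_star_mono inf_le_right)) inf_le_right
          _ ≤ e * s := iq_mul_le_mul_right hs.2 s
          _ = s := he1 s
    have heq := hsg b hkey
    have hbb : b * star b ≤ a * ⊤ ⊓ e := by
      refine le_inf ?_ ?_
      · exact iq_mul_le_mul inf_le_left le_top
      · exact le_trans (iq_mul_le_mul inf_le_right (iq_star_mono inf_le_right)) hs.2
    calc b = b * star b * b := heq.symm
      _ ≤ (a * ⊤ ⊓ e) * b := iq_mul_le_mul_right hbb b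
      _ ≤ (a * ⊤ ⊓ e) * a := iq_mul_le_mul_left inf_le_left _
end
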